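/- Let a>0, α∈ℝ, m∈ℤ and λ∈ℂ. There exists a twice continuously differentiable function ψ:[-a,a]→ℂ, not identically zero, with −ψ″(x)+m²ψ(x)=λψ(x) for all x∈[-a,a] and ψ′(a)+iαψ(a)=0, ψ′(−a)+iαψ(−a)=0, if and only if λ=α²+m² or λ=(jπ/(2a))²+m² for some positive integer j. Moreover, for λ=α²+m² the function ψ(x)=exp(−iαx) is such a solution. -/

import Mathlib

set_option linter.unusedTactic false

open Complex Set


section Helpers

private lemma hasDerivAt_cexp_real (c : ℂ) (x : ℝ) :
    HasDerivAt (fun y : ℝ => Complex.exp (c * y)) (c * Complex.exp (c * x)) x := by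
  have h : HasDerivAt (fun z : ℂ => Complex.exp (c * z)) (c * Complex.exp (c * x)) (x : ℂ) := by
    have e := (Complex.hasDerivAt_exp (c * (x:ℂ))).comp (x:ℂ)
      ((hasDerivAt_id (x:ℂ)).const_mul c)
    rw [Function.comp_def] at e
    exact e.congr_deriv (by ring)
  exact h.comp_ofReal

private lemma hasDerivAt_ccos_real (c d : ℂ) (x : ℝ) :
    HasDerivAt (fun y : ℝ => Complex.cos (c * y - d)) (-(c * Complex.sin (c * x - d))) x := by
  have h1 : HasDerivAt (fun z : ℂ => c * z - d) c (x:ℂ) := by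
    simpa using ((hasDerivAt_id (x:ℂ)).const_mul c).sub_const d
  have h : HasDerivAt (fun z : ℂ => Complex.cos (c * z - d))
      (-(c * Complex.sin (c * (x:ℂ) - d))) (x : ℂ) := by
    have e := (Complex.hasDerivAt_cos (c * (x:ℂ) - d)).comp (x:ℂ) h1
    rw [Function.comp_def] at e
    exact e.congr_deriv (by ring)
  exact h.comp_ofReal

private lemma hasDerivAt_csin_real (c d : ℂ) (x : ℝ) :
    HasDerivAt (fun y : ℝ => Complex.sin (c * y - d)) (c * Complex.cos (c * x - d)) x := by
  have h1 : HasDerivAt (fun z : ℂ => c * z - d) c (x:ℂ) := by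
    simpa using ((hasDerivAt_id (x:ℂ)).const_mul c).sub_const d
  have h : HasDerivAt (fun z : ℂ => Complex.sin (c * z - d))
      (c * Complex.cos (c * (x:ℂ) - d)) (x : ℂ) := by
    have e := (Complex.hasDerivAt_sin (c * (x:ℂ) - d)).comp (x:ℂ) h1
    rw [Function.comp_def] at e
    exact e.congr_deriv (by ring)
  exact h.comp_ofReal

private lemma const_of_deriv_zero {a : ℝ} {f : ℝ → ℂ}
    (hf : ∀ x ∈ Set.Icc (-a) a, HasDerivAt f 0 x) :
    ∀ x ∈ Set.Icc (-a) a, f x = f (-a) := by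
  have hcont : ContinuousOn f (Set.Icc (-a) a) := fun x hx =>
    (hf x hx).continuousAt.continuousWithinAt
  exact fun x hx => constant_of_has_deriv_right_zero hcont
    (fun y hy => ((hf y (Set.Ico_subset_Icc_self hy)).hasDerivWithinAt)) x hx

private lemma exp_mul_const {a : ℝ} {v : ℝ → ℂ} {c : ℂ}
    (hv : ∀ x ∈ Set.Icc (-a) a, HasDerivAt v (c * v x) x) :
    ∀ x ∈ Set.Icc (-a) a,
      Complex.exp (-c * x) * v x = Complex.exp (-c * ((-a : ℝ) : ℂ)) * v (-a) := by
  have := const_of_deriv_zero (f := fun x : ℝ => Complex.exp (-c * x) * v x) (a := a) ?_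
  · exact this
  intro x hx
  have h1 := (hasDerivAt_cexp_real (-c) x).mul (hv x hx)
  refine h1.congr_deriv ?_
  ring

private lemma hasDerivAt_ofReal_mul (B : ℂ) (x : ℝ) :
    HasDerivAt (fun y : ℝ => B * (y:ℂ)) B x := by
  simpa using (Complex.ofRealCLM.hasDerivAt (x := x)).const_mul B

/-- key reduction: if `ψ'' = -μ² ψ`, then `exp(-(iμ)x) (ψ' + iμψ)` is constant. -/
private lemma key {a : ℝ} (μ : ℂ) {ψ ψ' ψ'' : ℝ → ℂ}
    (hd1 : ∀ x ∈ Set.Icc (-a) a, HasDerivAt ψ (ψ' x) x)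
    (hd2 : ∀ x ∈ Set.Icc (-a) a, HasDerivAt ψ' (ψ'' x) x)
    (hψ'' : ∀ x ∈ Set.Icc (-a) a, ψ'' x = -μ^2 * ψ x) :
    ∀ x ∈ Set.Icc (-a) a,
      Complex.exp (-(Complex.I*μ) * x) * (ψ' x + Complex.I*μ*ψ x)
        = Complex.exp (-(Complex.I*μ) * ((-a : ℝ) : ℂ)) * (ψ' (-a) + Complex.I*μ*ψ (-a)) := by
  apply exp_mul_const (v := fun x => ψ' x + Complex.I*μ*ψ x) (c := Complex.I*μ)
  intro x hx
  have h := (hd2 x hx).add ((hd1 x hx).const_mul (Complex.I*μ))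
  refine h.congr_deriv ?_
  rw [hψ'' x hx]
  linear_combination -(μ^2 * ψ x) * Complex.I_sq

/-- The exponential eigenfunction for `λ = α² + m²`. -/
private lemma sol_exp (a α : ℝ) (ha : 0 < a) (m : ℤ) (lam : ℂ)
    (hlam : lam = (α : ℂ) ^ 2 + (m : ℂ) ^ 2) :
    ∃ ψ' ψ'' : ℝ → ℂ,
      (∀ x ∈ Set.Icc (-a) a,
        HasDerivAt (fun x : ℝ => Complex.exp (-(Complex.I * (α : ℂ) * (x : ℂ)))) (ψ' x) x) ∧
      (∀ x ∈ Set.Icc (-a) a, HasDerivAt ψ' (ψ'' x) x) ∧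
      ContinuousOn ψ'' (Set.Icc (-a) a) ∧
      (∃ x ∈ Set.Icc (-a) a, Complex.exp (-(Complex.I * (α : ℂ) * (x : ℂ))) ≠ 0) ∧
      (∀ x ∈ Set.Icc (-a) a, -ψ'' x + (m : ℂ) ^ 2 * Complex.exp (-(Complex.I * (α : ℂ) * (x : ℂ)))
          = lam * Complex.exp (-(Complex.I * (α : ℂ) * (x : ℂ)))) ∧
      ψ' a + Complex.I * (α : ℂ) * Complex.exp (-(Complex.I * (α : ℂ) * (a : ℂ))) = 0 ∧
      ψ' (-a) + Complex.I * (α : ℂ) * Complex.exp (-(Complex.I * (α : ℂ) * ((-a : ℝ) : ℂ))) = 0 := by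
  refine ⟨fun x : ℝ => -(Complex.I * (α:ℂ)) * Complex.exp (-(Complex.I * (α:ℂ) * (x:ℂ))),
    fun x : ℝ => -((α:ℂ))^2 * Complex.exp (-(Complex.I * (α:ℂ) * (x:ℂ))), ?_, ?_, ?_, ?_, ?_, ?_, ?_⟩
  · intro x _
    have h := hasDerivAt_cexp_real (-(Complex.I * (α:ℂ))) x
    simp only [neg_mul] at h ⊢
    exact h
  · intro x _
    have h := (hasDerivAt_cexp_real (-(Complex.I * (α:ℂ))) x).const_mul (-(Complex.I * (α:ℂ)))
    simp only [neg_mul] at h ⊢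
    refine h.congr_deriv ?_
    linear_combination -(-(α:ℂ)^2 * Complex.exp (-(Complex.I * ↑α * ↑x))) * Complex.I_sq
  · apply Continuous.continuousOn
    fun_prop
  · exact ⟨a, ⟨by linarith, le_refl a⟩, Complex.exp_ne_zero _⟩
  · intro x _
    rw [hlam]; ring
  · ring
  · ring

end Helpers


section Main

/-- The eigenfunction for `λ = (jπ/(2a))² + m²`. -/
private lemma sol_cos (a α : ℝ) (ha : 0 < a) (m : ℤ) (lam : ℂ) (j : ℕ) (hj : 0 < j)
    (hlam : lam = (((j : ℝ) * Real.pi / (2 * a) : ℝ) : ℂ) ^ 2 + (m : ℂ) ^ 2) :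
    ∃ ψ ψ' ψ'' : ℝ → ℂ,
      (∀ x ∈ Set.Icc (-a) a, HasDerivAt ψ (ψ' x) x) ∧
      (∀ x ∈ Set.Icc (-a) a, HasDerivAt ψ' (ψ'' x) x) ∧
      ContinuousOn ψ'' (Set.Icc (-a) a) ∧
      (∃ x ∈ Set.Icc (-a) a, ψ x ≠ 0) ∧
      (∀ x ∈ Set.Icc (-a) a, -ψ'' x + (m : ℂ) ^ 2 * ψ x = lam * ψ x) ∧
      ψ' a + Complex.I * (α : ℂ) * ψ a = 0 ∧
      ψ' (-a) + Complex.I * (α : ℂ) * ψ (-a) = 0 := by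
  set μ : ℝ := (j : ℝ) * Real.pi / (2 * a) with hμdef
  have hμpos : 0 < μ := by
    apply div_pos (mul_pos _ Real.pi_pos) (by linarith)
    exact_mod_cast hj
  have hμ0 : ((μ:ℝ):ℂ) ≠ 0 := Complex.ofReal_ne_zero.mpr hμpos.ne'
  refine ⟨fun x : ℝ => Complex.cos ((μ:ℂ) * x - (μ:ℂ) * a)
      - (Complex.I * α / μ) * Complex.sin ((μ:ℂ) * x - (μ:ℂ) * a),
    fun x : ℝ => -(μ:ℂ) * Complex.sin ((μ:ℂ) * x - (μ:ℂ) * a)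
      - (Complex.I * α) * Complex.cos ((μ:ℂ) * x - (μ:ℂ) * a),
    fun x : ℝ => -(μ:ℂ)^2 * (Complex.cos ((μ:ℂ) * x - (μ:ℂ) * a)
      - (Complex.I * α / μ) * Complex.sin ((μ:ℂ) * x - (μ:ℂ) * a)),
    ?_, ?_, ?_, ?_, ?_, ?_, ?_⟩
  · intro x _
    have h := (hasDerivAt_ccos_real (μ:ℂ) ((μ:ℂ)*a) x).sub
      ((hasDerivAt_csin_real (μ:ℂ) ((μ:ℂ)*a) x).const_mul (Complex.I * α / μ))
    refine h.congr_deriv ?_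
    field_simp
  · intro x _
    have h := ((hasDerivAt_csin_real (μ:ℂ) ((μ:ℂ)*a) x).const_mul (-(μ:ℂ))).sub
      ((hasDerivAt_ccos_real (μ:ℂ) ((μ:ℂ)*a) x).const_mul (Complex.I * α))
    refine h.congr_deriv ?_
    field_simp
    ring
  · apply Continuous.continuousOn
    fun_prop
  · refine ⟨a, ⟨by linarith, le_refl a⟩, ?_⟩
    simp [sub_self]
  · intro x _
    rw [hlam]
    ring
  · simp [sub_self]
  · have hsin : Complex.sin ((μ:ℂ) * ((-a : ℝ):ℂ) - (μ:ℂ) * a) = 0 := by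
      have harg : (μ:ℂ) * ((-a : ℝ):ℂ) - (μ:ℂ) * a = ((-(j:ℤ) : ℤ) : ℂ) * (Real.pi : ℂ) := by
        push_cast
        rw [hμdef]
        have ha0 : (a:ℂ) ≠ 0 := Complex.ofReal_ne_zero.mpr ha.ne'
        push_cast
        field_simp
        ring
      rw [harg]
      exact_mod_cast Complex.sin_int_mul_pi (-(j:ℤ))
    simp only [hsin]
    ring

private lemma forward (a α : ℝ) (ha : 0 < a) (m : ℤ) (lam : ℂ) (ψ ψ' ψ'' : ℝ → ℂ)
    (hd1 : ∀ x ∈ Set.Icc (-a) a, HasDerivAt ψ (ψ' x) x)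
    (hd2 : ∀ x ∈ Set.Icc (-a) a, HasDerivAt ψ' (ψ'' x) x)
    (hnt : ∃ x ∈ Set.Icc (-a) a, ψ x ≠ 0)
    (hode : ∀ x ∈ Set.Icc (-a) a, -ψ'' x + (m : ℂ) ^ 2 * ψ x = lam * ψ x)
    (hbc1 : ψ' a + Complex.I * (α : ℂ) * ψ a = 0)
    (hbc2 : ψ' (-a) + Complex.I * (α : ℂ) * ψ (-a) = 0) :
    lam = (α : ℂ) ^ 2 + (m : ℂ) ^ 2 ∨
      ∃ j : ℕ, 0 < j ∧
        lam = (((j : ℝ) * Real.pi / (2 * a) : ℝ) : ℂ) ^ 2 + (m : ℂ) ^ 2 := by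
  obtain ⟨x0, hx0, hx0ne⟩ := hnt
  have haIcc : a ∈ Set.Icc (-a) a := ⟨by linarith, le_refl a⟩
  have hnaIcc : -a ∈ Set.Icc (-a) a := ⟨le_refl _, by linarith⟩
  have ha0 : (a:ℂ) ≠ 0 := Complex.ofReal_ne_zero.mpr ha.ne'
  have hψ'' : ∀ x ∈ Set.Icc (-a) a, ψ'' x = ((m:ℂ)^2 - lam) * ψ x := by
    intro x hx
    linear_combination -(hode x hx)
  by_cases hk0 : lam = (m:ℂ)^2
  · -- zero frequency case
    have hd20 : ∀ x ∈ Set.Icc (-a) a, HasDerivAt ψ' 0 x := by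
      intro x hx
      have h := hd2 x hx
      rwa [hψ'' x hx, hk0, sub_self, zero_mul] at h
    have hc1 := const_of_deriv_zero hd20
    by_cases hα : α = 0
    · left
      subst hα
      rw [hk0]
      norm_num
    · exfalso
      set B := ψ' (-a) with hB
      have hc2 : ∀ x ∈ Set.Icc (-a) a, ψ x - B * x = ψ (-a) - B * ((-a : ℝ) : ℂ) := by
        have := const_of_deriv_zero (f := fun x : ℝ => ψ x - B * (x:ℂ)) (a := a) ?_
        · exact this
        intro x hx
        have h := (hd1 x hx).sub (hasDerivAt_ofReal_mul B x)
        rwa [hc1 x hx, sub_self] at h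
      have e1 : B + Complex.I * α * ψ a = 0 := by rw [← hc1 a haIcc]; exact hbc1
      have e2 : B + Complex.I * α * ψ (-a) = 0 := hbc2
      have e3 := hc2 a haIcc
      push_cast at e3
      have hB0 : B = 0 := by
        have hprod : Complex.I * α * (2*(a:ℂ)) * B = 0 := by
          linear_combination e1 - e2 - Complex.I * (α:ℂ) * e3
        have hne : Complex.I * (α:ℂ) * (2*(a:ℂ)) ≠ 0 :=
          mul_ne_zero (mul_ne_zero Complex.I_ne_zero (Complex.ofReal_ne_zero.mpr hα))
            (by simpa using ha0)
        exact (mul_eq_zero.mp hprod).resolve_left hne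
      have hψa : ψ a = 0 := by
        have hne : Complex.I * (α:ℂ) ≠ 0 :=
          mul_ne_zero Complex.I_ne_zero (Complex.ofReal_ne_zero.mpr hα)
        have : Complex.I * α * ψ a = 0 := by linear_combination e1 - hB0
        exact (mul_eq_zero.mp this).resolve_left hne
      have hψna : ψ (-a) = 0 := by
        push_cast at e3
        rw [hB0] at e3
        simpa [hψa] using e3.symm
      have := hc2 x0 hx0
      rw [hB0, hψna] at this
      simp at this
      exact hx0ne this
  · -- nonzero frequency
    have hk : lam - (m:ℂ)^2 ≠ 0 := sub_ne_zero.mpr hk0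
    obtain ⟨μ, hμ2⟩ : ∃ μ : ℂ, μ^2 = lam - (m:ℂ)^2 := by
      refine ⟨(lam - (m:ℂ)^2) ^ ((2:ℕ):ℂ)⁻¹, ?_⟩
      exact_mod_cast Complex.cpow_nat_inv_pow _ (by norm_num : (2:ℕ) ≠ 0)
    have hμ0 : μ ≠ 0 := by
      intro h
      apply hk
      rw [← hμ2, h]
      ring
    have hψ''2 : ∀ x ∈ Set.Icc (-a) a, ψ'' x = -μ^2 * ψ x := by
      intro x hx
      rw [hψ'' x hx, hμ2]
      ring
    have hψ''2' : ∀ x ∈ Set.Icc (-a) a, ψ'' x = -(-μ)^2 * ψ x := by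
      intro x hx
      rw [hψ''2 x hx]
      ring
    have Ev := key μ hd1 hd2 hψ''2
    have Ew := key (-μ) hd1 hd2 hψ''2'
    -- normalize the exp arguments
    have ea1 : -(Complex.I*μ) * ((a:ℝ):ℂ) = -(Complex.I*μ*a) := by ring
    have ea2 : -(Complex.I*μ) * ((-a:ℝ):ℂ) = Complex.I*μ*a := by push_cast; ring
    have ea3 : -(Complex.I*(-μ)) * ((a:ℝ):ℂ) = Complex.I*μ*a := by ring
    have ea4 : -(Complex.I*(-μ)) * ((-a:ℝ):ℂ) = -(Complex.I*μ*a) := by push_cast; ring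
    set A : ℂ := Complex.exp (Complex.I*μ*a) with hA
    set B : ℂ := Complex.exp (-(Complex.I*μ*a)) with hBdef
    have hva := Ev a haIcc
    rw [ea1, ea2] at hva
    have hwa := Ew a haIcc
    rw [ea3, ea4] at hwa
    -- hva : B * (ψ' a + I μ ψ a) = A * (ψ' (-a) + I μ ψ (-a))
    -- hwa : A * (ψ' a - I μ ψ a) = B * (ψ' (-a) - I μ ψ (-a))
    by_cases hψa : ψ a = 0
    · exfalso
      have hψ'a : ψ' a = 0 := by
        have := hbc1
        rw [hψa] at this
        simpa using this
      have hVna : ψ' (-a) + Complex.I*μ*ψ (-a) = 0 := by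
        have hAne : A ≠ 0 := Complex.exp_ne_zero _
        have : A * (ψ' (-a) + Complex.I*μ*ψ (-a)) = 0 := by
          rw [← hva, hψa, hψ'a]
          ring
        exact (mul_eq_zero.mp this).resolve_left hAne
      have hWna : ψ' (-a) + Complex.I*(-μ)*ψ (-a) = 0 := by
        have hBne : B ≠ 0 := Complex.exp_ne_zero _
        have : B * (ψ' (-a) + Complex.I*(-μ)*ψ (-a)) = 0 := by
          rw [← hwa, hψa, hψ'a]
          ring
        exact (mul_eq_zero.mp this).resolve_left hBne
      -- hence v ≡ 0 and w ≡ 0 on the interval, so ψ x0 = 0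
      have hv0 := Ev x0 hx0
      have hw0 := Ew x0 hx0
      rw [ea2, hVna, mul_zero] at hv0
      rw [ea4, hWna, mul_zero] at hw0
      have hVx0 : ψ' x0 + Complex.I*μ*ψ x0 = 0 :=
        (mul_eq_zero.mp hv0).resolve_left (Complex.exp_ne_zero _)
      have hWx0 : ψ' x0 + Complex.I*(-μ)*ψ x0 = 0 :=
        (mul_eq_zero.mp hw0).resolve_left (Complex.exp_ne_zero _)
      have : (2*Complex.I*μ) * ψ x0 = 0 := by linear_combination hVx0 - hWx0
      exact hx0ne ((mul_eq_zero.mp this).resolve_left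
        (by exact mul_ne_zero (mul_ne_zero two_ne_zero Complex.I_ne_zero) hμ0))
    · -- main spectral condition
      have hmain : (μ^2 - (α:ℂ)^2) * (B^2 - A^2) * ψ a = 0 := by
        have hG : Complex.I * ((μ^2 - (α:ℂ)^2) * (B^2 - A^2) * ψ a) = 0 := by
          linear_combination ((μ+(α:ℂ))*B) * hva + ((μ-(α:ℂ))*A) * hwa
            + (2*μ*A*B) * hbc2 - ((μ+(α:ℂ))*B^2 + (μ-(α:ℂ))*A^2) * hbc1
        exact (mul_eq_zero.mp hG).resolve_left Complex.I_ne_zero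
      have hcases := mul_eq_zero.mp hmain
      rcases hcases with hcases | h
      · rcases mul_eq_zero.mp hcases with h | h
        · -- μ² = α²
          left
          linear_combination h - hμ2
        · -- exp condition
          right
          have hexp : Complex.exp (-(Complex.I*μ*a) + -(Complex.I*μ*a))
              = Complex.exp (Complex.I*μ*a + Complex.I*μ*a) := by
            rw [Complex.exp_add, Complex.exp_add]
            linear_combination h
          rw [Complex.exp_eq_exp_iff_exists_int] at hexp
          obtain ⟨n, hn⟩ := hexp
          have h4 : μ * (2*(a:ℂ)) = -(n:ℂ) * (Real.pi:ℂ) := by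
            linear_combination (Complex.I/2) * hn
              + (2*μ*(a:ℂ) + (n:ℂ)*(Real.pi:ℂ)) * Complex.I_sq
          have hn0 : n ≠ 0 := by
            rintro rfl
            apply hμ0
            have : μ * (2*(a:ℂ)) = 0 := by rw [h4]; push_cast; ring
            exact (mul_eq_zero.mp this).resolve_right (by simpa using ha0)
          refine ⟨n.natAbs, Int.natAbs_pos.mpr hn0, ?_⟩
          have hnn : ((n.natAbs : ℂ))^2 = ((n:ℂ))^2 := by
            rcases Int.natAbs_eq n with h' | h'
            · conv_rhs => rw [h']
              rw [Int.cast_natCast]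
            · conv_rhs => rw [h']
              rw [Int.cast_neg, Int.cast_natCast]
              ring
          have hlam2 : lam = μ^2 + (m:ℂ)^2 := by linear_combination -hμ2
          rw [hlam2]
          push_cast
          have h5 : μ^2 * (2*(a:ℂ))^2 = ((n:ℂ))^2 * (Real.pi:ℂ)^2 := by
            linear_combination (μ*(2*(a:ℂ)) - (n:ℂ)*(Real.pi:ℂ)) * h4
          have hμval : μ^2 = ((n.natAbs:ℂ) * (Real.pi:ℂ) / (2*(a:ℂ)))^2 := by
            have h2a : (2*(a:ℂ)) ≠ 0 := by simpa using ha0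
            field_simp
            linear_combination h5 - (Real.pi:ℂ)^2 * hnn
          linear_combination hμval
      · exact absurd h hψa


end Main

/-- A nontrivial twice continuously differentiable solution of the transverse
eigenvalue problem `-ψ'' + m² ψ = λ ψ` on `[-a, a]` with separated PT-symmetric
boundary conditions with parameters `(α, 0)`. -/
def IsTransverseSol (a α : ℝ) (m : ℤ) (lam : ℂ) (ψ : ℝ → ℂ) : Prop :=
  ∃ ψ' ψ'' : ℝ → ℂ,
    (∀ x ∈ Set.Icc (-a) a, HasDerivAt ψ (ψ' x) x) ∧
    (∀ x ∈ Set.Icc (-a) a, HasDerivAt ψ' (ψ'' x) x) ∧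
    ContinuousOn ψ'' (Set.Icc (-a) a) ∧
    (∃ x ∈ Set.Icc (-a) a, ψ x ≠ 0) ∧
    (∀ x ∈ Set.Icc (-a) a, -ψ'' x + (m : ℂ) ^ 2 * ψ x = lam * ψ x) ∧
    ψ' a + Complex.I * (α : ℂ) * ψ a = 0 ∧
    ψ' (-a) + Complex.I * (α : ℂ) * ψ (-a) = 0


/-- the explicit spectrum of the zero-curvature Hamiltonian
`H_{I(0)}^m(α, 0)`: the eigenvalues are `α² + m²` and `(jπ/(2a))² + m²` for
positive integers `j`; moreover `exp(-iαx)` is an eigenfunction for `α² + m²`. -/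

theorem pt_zero_curvature_spectrum
    (a α : ℝ) (ha : 0 < a) (m : ℤ) (lam : ℂ) :
    ((∃ ψ : ℝ → ℂ, IsTransverseSol a α m lam ψ) ↔
      (lam = (α : ℂ) ^ 2 + (m : ℂ) ^ 2 ∨
        ∃ j : ℕ, 0 < j ∧
          lam = (((j : ℝ) * Real.pi / (2 * a) : ℝ) : ℂ) ^ 2 + (m : ℂ) ^ 2)) ∧
    (lam = (α : ℂ) ^ 2 + (m : ℂ) ^ 2 →
      IsTransverseSol a α m lam
        (fun x : ℝ => Complex.exp (-(Complex.I * (α : ℂ) * (x : ℂ))))) := by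
  constructor
  · constructor
    · rintro ⟨ψ, ψ', ψ'', hd1, hd2, hcont, hnt, hode, hbc1, hbc2⟩
      exact forward a α ha m lam ψ ψ' ψ'' hd1 hd2 hnt hode hbc1 hbc2
    · rintro (h | ⟨j, hj, h⟩)
      · obtain ⟨ψ', ψ'', h1, h2, h3, h4, h5, h6, h7⟩ := sol_exp a α ha m lam h
        exact ⟨_, ψ', ψ'', h1, h2, h3, h4, h5, h6, h7⟩
      · obtain ⟨ψ, ψ', ψ'', h1, h2, h3, h4, h5, h6, h7⟩ := sol_cos a α ha m lam j hj h
        exact ⟨ψ, ψ', ψ'', h1, h2, h3, h4, h5, h6, h7⟩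
  · intro h
    obtain ⟨ψ', ψ'', h1, h2, h3, h4, h5, h6, h7⟩ := sol_exp a α ha m lam h
    exact ⟨ψ', ψ'', h1, h2, h3, h4, h5, h6, h7⟩
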